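/- If (A,B) is an oriented weave of N-sunbursts (N ≥ 3), then (B, −A) is also an oriented weave, where −A denotes the sunburst obtained by negating all vectors of A. In particular, (B, A) is a weave: for all k, the line through B's relevant vector does not lie in the closed acute sector determined by the corresponding pair of A's vectors. -/

import Mathlib

private lemma cross_decomp (u w v : ℝ × ℝ) (hD : u.1 * w.2 - u.2 * w.1 ≠ 0) :
    v = ((v.1 * w.2 - v.2 * w.1) / (u.1 * w.2 - u.2 * w.1)) • u
        + ((u.1 * v.2 - u.2 * v.1) / (u.1 * w.2 - u.2 * w.1)) • w := by
  apply Prod.ext <;> simp only [Prod.fst_add, Prod.snd_add, Prod.smul_fst, Prod.smul_snd, smul_eq_mul] <;>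
    rw [div_mul_eq_mul_div, div_mul_eq_mul_div, ← add_div, eq_div_iff hD] <;> ring

/-- If `(A, B)` is an oriented weave of `N`-sunbursts, then `(B, -A)` (with the
appropriate index shift) is also an oriented weave, and in particular `(B, A)`
is a weave: the line spanned by each relevant vector of `A` does not lie in the
closed sector bounded by the corresponding pair of consecutive vectors of `B`. -/
theorem oriented_weave_swap (N : ℕ) (hN : 3 ≤ N) (A B : Fin N → ℝ × ℝ)
    (nxt : Fin N → Fin N)
    (hnxt : ∀ k : Fin N, nxt k = ⟨(k.val + 1) % N, Nat.mod_lt _ (by omega)⟩)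
    -- both are sunbursts: unit vectors, consecutive pairs positively oriented
    (hAunit : ∀ k, (A k).1 ^ 2 + (A k).2 ^ 2 = 1)
    (hBunit : ∀ k, (B k).1 ^ 2 + (B k).2 ^ 2 = 1)
    (hAorder : ∀ k, 0 < (A k).1 * (A (nxt k)).2 - (A k).2 * (A (nxt k)).1)
    (hBorder : ∀ k, 0 < (B k).1 * (B (nxt k)).2 - (B k).2 * (B (nxt k)).1)
    -- `(A, B)` is an oriented weave:
    (hweave : ∀ k : Fin N, ∃ s t : ℝ, 0 < s ∧ 0 < t ∧
      B k = s • A (nxt k) + t • (-(A k))) :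
    -- `(B, -A)` is an oriented weave:
    (∀ k : Fin N, ∃ s t : ℝ, 0 < s ∧ 0 < t ∧
      -(A (nxt k)) = s • B (nxt k) + t • (-(B k))) ∧
    -- in particular `(B, A)` is a weave:
    (∀ k : Fin N,
      (¬ ∃ s t : ℝ, 0 ≤ s ∧ 0 ≤ t ∧ A (nxt k) = s • B k + t • B (nxt k)) ∧
      (¬ ∃ s t : ℝ, 0 ≤ s ∧ 0 ≤ t ∧ -(A (nxt k)) = s • B k + t • B (nxt k))) := by
  have main : ∀ k : Fin N, ∃ s t : ℝ, 0 < s ∧ 0 < t ∧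
      -(A (nxt k)) = s • B (nxt k) + t • (-(B k)) := by
    intro k
    obtain ⟨s1, t1, hs1, ht1, hb⟩ := hweave k
    obtain ⟨s2, t2, hs2, ht2, hb'⟩ := hweave (nxt k)
    set a := A k; set a' := A (nxt k); set a'' := A (nxt (nxt k))
    set b := B k; set b' := B (nxt k)
    have hb1 : b.1 = s1 * a'.1 - t1 * a.1 := by
      have := congrArg Prod.fst hb; simpa [smul_eq_mul, sub_eq_add_neg] using this
    have hb2 : b.2 = s1 * a'.2 - t1 * a.2 := by
      have := congrArg Prod.snd hb; simpa [smul_eq_mul, sub_eq_add_neg] using this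
    have hb'1 : b'.1 = s2 * a''.1 - t2 * a'.1 := by
      have := congrArg Prod.fst hb'; simpa [smul_eq_mul, sub_eq_add_neg] using this
    have hb'2 : b'.2 = s2 * a''.2 - t2 * a'.2 := by
      have := congrArg Prod.snd hb'; simpa [smul_eq_mul, sub_eq_add_neg] using this
    have hDb : 0 < b.1 * b'.2 - b.2 * b'.1 := hBorder k
    -- basis (b', -b)
    have hD : b'.1 * (-b).2 - b'.2 * (-b).1 = b.1 * b'.2 - b.2 * b'.1 := by
      simp; ring
    have hDne : b'.1 * (-b).2 - b'.2 * (-b).1 ≠ 0 := by rw [hD]; exact ne_of_gt hDb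
    have hdec := cross_decomp b' (-b) (-a') hDne
    refine ⟨_, _, ?_, ?_, hdec⟩
    · -- coefficient on b' : ((-a').1 * (-b).2 - (-a').2 * (-b).1) / D
      apply div_pos _ (by rw [hD]; exact hDb)
      have : (-a').1 * (-b).2 - (-a').2 * (-b).1
          = t1 * (a.1 * a'.2 - a.2 * a'.1) := by
        simp [hb1, hb2]; ring
      rw [this]
      exact mul_pos ht1 (hAorder k)
    · apply div_pos _ (by rw [hD]; exact hDb)
      have : b'.1 * (-a').2 - b'.2 * (-a').1
          = s2 * (a'.1 * a''.2 - a'.2 * a''.1) := by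
        simp [hb'1, hb'2]; ring
      rw [this]
      exact mul_pos hs2 (hAorder (nxt k))
  refine ⟨main, fun k => ?_⟩
  obtain ⟨s0, t0, hs0, ht0, heq⟩ := main k
  set a' := A (nxt k); set b := B k; set b' := B (nxt k)
  have hDb : 0 < b.1 * b'.2 - b.2 * b'.1 := hBorder k
  have h1 : (-a').1 = s0 * b'.1 - t0 * b.1 := by
    have := congrArg Prod.fst heq; simpa [smul_eq_mul, sub_eq_add_neg] using this
  have h2 : (-a').2 = s0 * b'.2 - t0 * b.2 := by
    have := congrArg Prod.snd heq; simpa [smul_eq_mul, sub_eq_add_neg] using this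
  constructor
  · rintro ⟨s, t, hs, ht, he⟩
    have he1 : a'.1 = s * b.1 + t * b'.1 := by
      have := congrArg Prod.fst he; simpa [smul_eq_mul] using this
    have he2 : a'.2 = s * b.2 + t * b'.2 := by
      have := congrArg Prod.snd he; simpa [smul_eq_mul] using this
    -- cross(b, a') = t * D  and  = -s0 * D
    have hc1 : b.1 * a'.2 - b.2 * a'.1 = t * (b.1 * b'.2 - b.2 * b'.1) := by
      rw [he1, he2]; ring
    have hc2 : b.1 * a'.2 - b.2 * a'.1 = -s0 * (b.1 * b'.2 - b.2 * b'.1) := by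
      have h1' : a'.1 = -(s0 * b'.1 - t0 * b.1) := by
        rw [← h1]; simp
      have h2' : a'.2 = -(s0 * b'.2 - t0 * b.2) := by
        rw [← h2]; simp
      rw [h1', h2']; ring
    nlinarith
  · rintro ⟨s, t, hs, ht, he⟩
    have he1 : (-a').1 = s * b.1 + t * b'.1 := by
      have := congrArg Prod.fst he; simpa [smul_eq_mul] using this
    have he2 : (-a').2 = s * b.2 + t * b'.2 := by
      have := congrArg Prod.snd he; simpa [smul_eq_mul] using this
    -- cross(-a', b') = s * D and = -t0 * D
    have hc1 : (-a').1 * b'.2 - (-a').2 * b'.1 = s * (b.1 * b'.2 - b.2 * b'.1) := by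
      rw [he1, he2]; ring
    have hc2 : (-a').1 * b'.2 - (-a').2 * b'.1 = -t0 * (b.1 * b'.2 - b.2 * b'.1) := by
      rw [h1, h2]; ring
    nlinarith
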